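/- Let G be a finite simple graph with a fixed total order on its vertex set, and let 𝒯 be a nonempty set of triangles (3-cliques) of G. Then the smallest positive eigenvalue of the restricted total edge Laplacian L₁ = δ₀ δ₀ᵀ + δ₁(𝒯)ᵀ δ₁(𝒯) equals the minimum of the smallest positive eigenvalue of the graph Laplacian L = δ₀ᵀ δ₀ and the smallest positive eigenvalue λ(𝒯) of δ₁(𝒯)ᵀ δ₁(𝒯). In particular, if G is connected, then the smallest positive eigenvalue of L₁ equals min{λ₂(L), λ(𝒯)}, where λ₂(L) is the second smallest eigenvalue of L. -/

import Mathlib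

open Finset Matrix

/-- The sign `[T : e]` of an edge `e` in a triangle `T` (both given as finsets of
vertices of a linearly ordered type). -/
noncomputable def triSign {V : Type*} [LinearOrder V] (T e : Finset V) : ℝ :=
  if e ⊆ T ∧ e.card = 2 ∧ T.card = 3 then
    if (T \ e).max = T.max ∨ (T \ e).min = T.min then 1 else -1
  else 0

/-- The signed vertex-edge incidence matrix `δ₀` of a graph `G`: rows indexed by the
edges of `G` (as 2-cliques), columns by vertices; entry `+1` at the larger endpoint,
`-1` at the smaller endpoint, `0` otherwise. -/
noncomputable def d0 {V : Type*} [Fintype V] [LinearOrder V] (G : SimpleGraph V)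
    [DecidableRel G.Adj] : Matrix {e // e ∈ G.cliqueFinset 2} V ℝ :=
  Matrix.of fun e v => if v ∈ e.1 then (if ∀ w ∈ e.1, w ≤ v then 1 else -1) else 0

/-- The signed edge-triangle incidence matrix `δ₁(𝒯)` of a set `F` of triangles of
`G`: rows indexed by `F`, columns by the edges of `G`. -/
noncomputable def d1 {V : Type*} [Fintype V] [LinearOrder V] (G : SimpleGraph V)
    [DecidableRel G.Adj] (F : Finset (Finset V)) :
    Matrix {T // T ∈ F} {e // e ∈ G.cliqueFinset 2} ℝ :=
  Matrix.of fun T e => triSign T.1 e.1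

/-- The smallest positive eigenvalue of a matrix. -/
noncomputable def lambdaMinPos {m : Type*} [Fintype m] (M : Matrix m m ℝ) : ℝ :=
  sInf {μ : ℝ | 0 < μ ∧ ∃ v : m → ℝ, v ≠ 0 ∧ M.mulVec v = μ • v}

/-- The second smallest eigenvalue (counted with multiplicity) of a square real
matrix, read off from the sorted multiset of roots of its characteristic
polynomial. -/
noncomputable def secondSmallestEig {m : Type*} [Fintype m] [DecidableEq m]
    (M : Matrix m m ℝ) : ℝ :=
  (M.charpoly.roots.sort (· ≤ ·)).getD 1 0


open Polynomial





/-- The set of positive eigenvalues (with eigenvector) of a matrix. -/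
def posEigs {m : Type*} [Fintype m] (M : Matrix m m ℝ) : Set ℝ :=
  {μ : ℝ | 0 < μ ∧ ∃ v : m → ℝ, v ≠ 0 ∧ M.mulVec v = μ • v}

lemma posEigs_bddBelow {m : Type*} [Fintype m] (M : Matrix m m ℝ) : BddBelow (posEigs M) :=
  ⟨0, fun μ hμ => hμ.1.le⟩

lemma posEigs_mul_transpose_subset {m n : Type*} [Fintype m] [Fintype n]
    (N : Matrix m n ℝ) : posEigs (Nᵀ * N) ⊆ posEigs (N * Nᵀ) := by
  rintro μ ⟨hμ, v, hv, hMv⟩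
  refine ⟨hμ, N *ᵥ v, ?_, ?_⟩
  · intro h
    apply hv
    have h2 : (Nᵀ * N) *ᵥ v = 0 := by rw [← Matrix.mulVec_mulVec, h, Matrix.mulVec_zero]
    rw [hMv] at h2
    simpa [hμ.ne', smul_eq_zero] using h2
  · rw [Matrix.mulVec_mulVec, Matrix.mul_assoc, ← Matrix.mulVec_mulVec, hMv,
      Matrix.mulVec_smul]

lemma posEigs_transpose_mul {m n : Type*} [Fintype m] [Fintype n]
    (N : Matrix m n ℝ) : posEigs (Nᵀ * N) = posEigs (N * Nᵀ) := by
  refine le_antisymm (posEigs_mul_transpose_subset N) ?_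
  have := posEigs_mul_transpose_subset Nᵀ
  rwa [Matrix.transpose_transpose] at this

lemma posEigs_add {m : Type*} [Fintype m] {P Q : Matrix m m ℝ}
    (hPQ : P * Q = 0) (hQP : Q * P = 0) : posEigs (P + Q) = posEigs P ∪ posEigs Q := by
  ext μ
  constructor
  · rintro ⟨hμ, v, hv, hMv⟩
    by_cases hPv : P *ᵥ v = 0
    · by_cases hQv : Q *ᵥ v = 0
      · exfalso
        rw [Matrix.add_mulVec, hPv, hQv, add_zero] at hMv
        exact hv (by simpa [hμ.ne', smul_eq_zero] using hMv.symm)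
      · right
        refine ⟨hμ, Q *ᵥ v, hQv, ?_⟩
        have : Q *ᵥ ((P + Q) *ᵥ v) = Q *ᵥ (μ • v) := by rw [hMv]
        rwa [Matrix.mulVec_mulVec, Matrix.mul_add, hQP, zero_add, ← Matrix.mulVec_mulVec,
          Matrix.mulVec_smul] at this
    · left
      refine ⟨hμ, P *ᵥ v, hPv, ?_⟩
      have : P *ᵥ ((P + Q) *ᵥ v) = P *ᵥ (μ • v) := by rw [hMv]
      rwa [Matrix.mulVec_mulVec, Matrix.mul_add, hPQ, add_zero, ← Matrix.mulVec_mulVec,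
        Matrix.mulVec_smul] at this
  · rintro (⟨hμ, v, hv, hMv⟩ | ⟨hμ, v, hv, hMv⟩)
    · refine ⟨hμ, v, hv, ?_⟩
      have hQv : Q *ᵥ v = 0 := by
        have : Q *ᵥ (P *ᵥ v) = Q *ᵥ (μ • v) := by rw [hMv]
        rw [Matrix.mulVec_mulVec, hQP, Matrix.zero_mulVec, Matrix.mulVec_smul] at this
        have := this.symm
        rw [smul_eq_zero] at this  -- μ • (Q v) = 0
        rcases this with h | h
        · exact absurd h hμ.ne'
        · exact h
      rw [Matrix.add_mulVec, hMv, hQv, add_zero]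
    · refine ⟨hμ, v, hv, ?_⟩
      have hPv : P *ᵥ v = 0 := by
        have : P *ᵥ (Q *ᵥ v) = P *ᵥ (μ • v) := by rw [hMv]
        rw [Matrix.mulVec_mulVec, hPQ, Matrix.zero_mulVec, Matrix.mulVec_smul] at this
        have := this.symm
        rw [smul_eq_zero] at this
        rcases this with h | h
        · exact absurd h hμ.ne'
        · exact h
      rw [Matrix.add_mulVec, hMv, hPv, zero_add]

lemma posEigs_nonempty {m n : Type*} [Fintype m] [Fintype n] [DecidableEq n]
    {N : Matrix m n ℝ} (hN : N ≠ 0) : (posEigs (Nᵀ * N)).Nonempty := by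
  have hpsd : (Nᵀ * N).PosSemidef := by
    have := Matrix.posSemidef_conjTranspose_mul_self N
    rwa [Matrix.conjTranspose_eq_transpose_of_trivial] at this
  have hne : (Nᵀ * N) ≠ 0 := by
    intro h
    apply hN
    rw [← Matrix.conjTranspose_mul_self_eq_zero (A := N),
      Matrix.conjTranspose_eq_transpose_of_trivial]
    exact h
  obtain ⟨v, t, ht, hv, hMv⟩ := hpsd.1.exists_eigenvector_of_ne_zero hne
  refine ⟨t, ⟨?_, v, hv, hMv⟩⟩
  have h1 : v ⬝ᵥ ((Nᵀ * N) *ᵥ v) = t * (v ⬝ᵥ v) := by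
    rw [hMv, dotProduct_smul, smul_eq_mul]
  have h2 : 0 ≤ v ⬝ᵥ ((Nᵀ * N) *ᵥ v) := by
    have := hpsd.dotProduct_mulVec_nonneg v
    simpa using this
  have h3 : 0 < v ⬝ᵥ v := by
    have hnn : 0 ≤ v ⬝ᵥ v := Finset.sum_nonneg fun i _ => mul_self_nonneg _
    rcases lt_or_eq_of_le hnn with h | h
    · exact h
    · exact absurd ((dotProduct_self_eq_zero).mp h.symm) hv
  rcases ht.lt_or_gt with h | h
  · nlinarith [h1, h2, h3]
  · exact h

lemma charmatrix_conj {n : Type*} [Fintype n] [DecidableEq n] (U D V : Matrix n n ℝ)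
    (hUV : U * V = 1) :
    charmatrix (U * D * V) = U.map C * charmatrix D * V.map C := by
  have hmapUV : U.map (C : ℝ →+* ℝ[X]) * V.map C = 1 := by
    rw [← Matrix.map_mul, hUV]
    ext i j
    by_cases h : i = j <;> simp [h, Matrix.one_apply]
  rw [charmatrix, charmatrix, Matrix.mul_sub, Matrix.sub_mul]
  congr 1
  · -- U.map C * scalar X * V.map C = scalar X
    have hc : U.map (C : ℝ →+* ℝ[X]) * Matrix.scalar n (X : ℝ[X]) =
        Matrix.scalar n (X : ℝ[X]) * U.map C := by
      rw [Matrix.scalar_commute]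
      intro r
      exact Commute.all _ _
    rw [hc, Matrix.mul_assoc, hmapUV, Matrix.mul_one]
  · -- U.map C * (mapMatrix D) * V.map C = mapMatrix (U*D*V)
    simp only [RingHom.mapMatrix_apply]
    rw [← Matrix.map_mul, ← Matrix.map_mul]

lemma charpoly_conj {n : Type*} [Fintype n] [DecidableEq n] (U D V : Matrix n n ℝ)
    (hUV : U * V = 1) (hVU : V * U = 1) : (U * D * V).charpoly = D.charpoly := by
  have hmapUV : U.map (C : ℝ →+* ℝ[X]) * V.map C = 1 := by
    rw [← Matrix.map_mul, hUV]
    ext i j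
    by_cases h : i = j <;> simp [h, Matrix.one_apply]
  have hmapVU : V.map (C : ℝ →+* ℝ[X]) * U.map C = 1 := by
    rw [← Matrix.map_mul, hVU]
    ext i j
    by_cases h : i = j <;> simp [h, Matrix.one_apply]
  rw [Matrix.charpoly, Matrix.charpoly, charmatrix_conj U D V hUV, Matrix.det_mul,
    Matrix.det_mul, mul_comm, ← mul_assoc, ← Matrix.det_mul, hmapVU]
  simp

lemma charpoly_diagonal {n : Type*} [Fintype n] [DecidableEq n] (d : n → ℝ) :
    (Matrix.diagonal d).charpoly = ∏ i, (X - C (d i)) := by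
  rw [Matrix.charpoly]
  have : charmatrix (Matrix.diagonal d) = Matrix.diagonal (fun i => X - C (d i)) := by
    ext i j
    by_cases h : i = j
    · subst h; simp
    · simp [h, Matrix.diagonal_apply_ne _ h]
  rw [this, Matrix.det_diagonal]

lemma hermCharpolyEq {n : Type*} [Fintype n] [DecidableEq n] {M : Matrix n n ℝ}
    (hM : M.IsHermitian) : M.charpoly = ∏ i, (X - C (hM.eigenvalues i)) := by
  have hsp := hM.spectral_theorem
  have hU1 : (hM.eigenvectorUnitary : Matrix n n ℝ) * (star hM.eigenvectorUnitary : Matrix n n ℝ) = 1 := by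
    exact_mod_cast hM.eigenvectorUnitary.2.2
  have hU2 : (star hM.eigenvectorUnitary : Matrix n n ℝ) * (hM.eigenvectorUnitary : Matrix n n ℝ) = 1 := by
    exact_mod_cast hM.eigenvectorUnitary.2.1
  have hD : (Matrix.diagonal (RCLike.ofReal ∘ hM.eigenvalues) : Matrix n n ℝ) =
      Matrix.diagonal hM.eigenvalues := by
    congr 1
  calc M.charpoly = _ := congrArg Matrix.charpoly hsp
    _ = (Matrix.diagonal (RCLike.ofReal ∘ hM.eigenvalues) : Matrix n n ℝ).charpoly :=
        charpoly_conj _ _ _ hU1 hU2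
    _ = ∏ i, (X - C (hM.eigenvalues i)) := by rw [hD, _root_.charpoly_diagonal]

lemma hermRootsCharpoly {n : Type*} [Fintype n] [DecidableEq n] {M : Matrix n n ℝ}
    (hM : M.IsHermitian) : M.charpoly.roots = Finset.univ.val.map hM.eigenvalues := by
  rw [hermCharpolyEq hM]
  have : ∏ i, (X - C (hM.eigenvalues i)) =
      (Multiset.map (fun a => X - C a) (Finset.univ.val.map hM.eigenvalues)).prod := by
    rw [Multiset.map_map]
    rfl
  rw [this, Polynomial.roots_multiset_prod_X_sub_C]

lemma eval_charpoly {n : Type*} [Fintype n] [DecidableEq n] (M : Matrix n n ℝ) (μ : ℝ) :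
    M.charpoly.eval μ = (Matrix.scalar n μ - M).det := by
  rw [Matrix.charpoly]
  have h1 : Polynomial.eval μ (charmatrix M).det = ((charmatrix M).map (evalRingHom μ)).det :=
    RingHom.map_det (evalRingHom μ) _
  have h2 : (charmatrix M).map (evalRingHom μ) = Matrix.scalar n μ - M := by
    ext i j
    by_cases h : i = j
    · subst h; simp [Matrix.scalar_apply]
    · simp [h, Matrix.scalar_apply, Matrix.diagonal_apply_ne _ h]
  rw [← h2]
  exact h1

lemma mem_posEigs_iff {n : Type*} [Fintype n] [DecidableEq n] {M : Matrix n n ℝ}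
    (hM : M.IsHermitian) (μ : ℝ) :
    μ ∈ {μ : ℝ | 0 < μ ∧ ∃ v : n → ℝ, v ≠ 0 ∧ M.mulVec v = μ • v} ↔
      0 < μ ∧ ∃ i, hM.eigenvalues i = μ := by
  constructor
  · rintro ⟨hμ, v, hv, hMv⟩
    refine ⟨hμ, ?_⟩
    have hdet : (Matrix.scalar n μ - M).det = 0 := by
      rw [← Matrix.exists_mulVec_eq_zero_iff]
      refine ⟨v, hv, ?_⟩
      have hscal : (Matrix.scalar n μ) *ᵥ v = μ • v := by
        funext i
        simp [Matrix.scalar_apply, Matrix.mulVec_diagonal]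
      rw [Matrix.sub_mulVec, hMv, hscal, sub_self]
    have := _root_.eval_charpoly M μ
    rw [hdet, hermCharpolyEq hM] at this
    simp only [Polynomial.eval_prod, Polynomial.eval_sub, Polynomial.eval_X,
      Polynomial.eval_C] at this
    have h0 : ∏ x : n, (μ - hM.eigenvalues x) = 0 := this
    obtain ⟨i, _, hi⟩ := Finset.prod_eq_zero_iff.mp h0
    have : μ - hM.eigenvalues i = 0 := hi
    exact ⟨i, by linarith⟩
  · rintro ⟨hμ, i, hi⟩
    refine ⟨hμ, ⇑(hM.eigenvectorBasis i), ?_, ?_⟩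
    · intro h
      apply hM.eigenvectorBasis.orthonormal.ne_zero i
      ext j
      exact congrFun h j
    · rw [hM.mulVec_eigenvectorBasis, hi]

lemma sort_getD_one_isLeast {s : Multiset ℝ} (h0 : ∀ x ∈ s, 0 ≤ x) (hc : s.count 0 = 1)
    (hlen : 2 ≤ Multiset.card s) :
    IsLeast {μ : ℝ | 0 < μ ∧ μ ∈ s} ((s.sort (· ≤ ·)).getD 1 0) := by
  set l := s.sort (· ≤ ·) with hl
  have hsort : l.Pairwise (· ≤ ·) := Multiset.pairwise_sort _ _
  have hmem : ∀ x, x ∈ l ↔ x ∈ s := fun x => Multiset.mem_sort _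
  have hcount : l.count 0 = 1 := by
    have : (l : Multiset ℝ) = s := Multiset.sort_eq _ _
    rw [← this] at hc
    simpa using hc
  have hlenl : 2 ≤ l.length := by
    rw [hl, Multiset.length_sort]
    exact hlen
  rcases l with _ | ⟨a, _ | ⟨b, t⟩⟩
  · simp at hlenl
  · simp at hlenl
  · have ha0 : a = 0 := by
      have hmem0 : (0:ℝ) ∈ a :: b :: t := by
        rw [← List.count_pos_iff]
        omega
      have h1 : 0 ≤ a := h0 a ((hmem a).mp (by simp))
      rcases List.mem_cons.mp hmem0 with h | h
      · exact h.symm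
      · have := (List.pairwise_cons.mp hsort).1 0 h
        linarith
    have hsort2 : (b :: t).Pairwise (· ≤ ·) := (List.pairwise_cons.mp hsort).2
    have hb0 : 0 < b := by
      have h1 : 0 ≤ b := h0 b ((hmem b).mp (by simp))
      rcases eq_or_lt_of_le h1 with h | h
      · exfalso
        rw [List.count_cons, List.count_cons, ha0, ← h] at hcount
        simp at hcount
      · exact h
    constructor
    · exact ⟨hb0, (hmem b).mp (by simp)⟩
    · rintro μ ⟨hμ, hμs⟩
      have hm : μ ∈ a :: b :: t := (hmem μ).mpr hμs
      rcases List.mem_cons.mp hm with h | h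
      · exfalso; rw [h, ha0] at hμ; exact lt_irrefl _ hμ
      · rcases List.mem_cons.mp h with h | h
        · simp [h]
        · simpa using (List.pairwise_cons.mp hsort2).1 μ h



lemma card_two_sorted {V : Type*} [LinearOrder V] {e : Finset V} (h : e.card = 2) :
    ∃ a b : V, a < b ∧ e = {a, b} := by
  have hlen : (e.sort (· ≤ ·)).length = 2 := by rw [Finset.length_sort]; exact h
  have hsl : (e.sort (· ≤ ·)).Pairwise (· < ·) := (Finset.sortedLT_sort e).pairwise
  have hts : (e.sort (· ≤ ·)).toFinset = e := Finset.sort_toFinset _ _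
  rcases hl : e.sort (· ≤ ·) with _ | ⟨a, _ | ⟨b, _ | ⟨c, t⟩⟩⟩ <;> rw [hl] at hlen <;>
    simp at hlen
  rw [hl] at hsl hts
  refine ⟨a, b, ?_, ?_⟩
  · exact (List.pairwise_cons.mp hsl).1 b (by simp)
  · rw [← hts]; simp [List.toFinset_cons]

lemma card_three_sorted {V : Type*} [LinearOrder V] {T : Finset V} (h : T.card = 3) :
    ∃ a b c : V, a < b ∧ b < c ∧ T = {a, b, c} := by
  have hlen : (T.sort (· ≤ ·)).length = 3 := by rw [Finset.length_sort]; exact h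
  have hsl : (T.sort (· ≤ ·)).Pairwise (· < ·) := (Finset.sortedLT_sort T).pairwise
  have hts : (T.sort (· ≤ ·)).toFinset = T := Finset.sort_toFinset _ _
  rcases hl : T.sort (· ≤ ·) with _ | ⟨a, _ | ⟨b, _ | ⟨c, _ | ⟨d, t⟩⟩⟩⟩ <;> rw [hl] at hlen <;>
    simp at hlen
  rw [hl] at hsl hts
  refine ⟨a, b, c, ?_, ?_, ?_⟩
  · exact (List.pairwise_cons.mp hsl).1 b (by simp)
  · exact (List.pairwise_cons.mp (List.pairwise_cons.mp hsl).2).1 c (by simp)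
  · rw [← hts]; simp [List.toFinset_cons]

lemma d0_apply_pair {V : Type*} [Fintype V] [LinearOrder V] (G : SimpleGraph V)
    [DecidableRel G.Adj] {a b : V} (hab : a < b) (he : ({a, b} : Finset V) ∈ G.cliqueFinset 2)
    (v : V) : d0 G ⟨{a, b}, he⟩ v = if v = b then 1 else if v = a then -1 else 0 := by
  rw [d0, Matrix.of_apply]
  by_cases hvb : v = b
  · subst hvb
    have hmem : v ∈ ({a, v} : Finset V) := by simp
    have hle : ∀ w ∈ ({a, v} : Finset V), w ≤ v := by
      intro w hw
      rcases Finset.mem_insert.mp hw with rfl | hw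
      · exact hab.le
      · simp at hw; subst hw; exact le_refl _
    simp [hmem, hle]
  · by_cases hva : v = a
    · subst hva
      have hmem : v ∈ ({v, b} : Finset V) := by simp
      have hnle : ¬ (∀ w ∈ ({v, b} : Finset V), w ≤ v) := by
        push_neg
        exact ⟨b, by simp, by simpa using hab⟩
      rw [if_pos hmem, if_neg hnle, if_neg hvb, if_pos rfl]
    · have hmem : v ∉ ({a, b} : Finset V) := by simp [hva, hvb]
      simp [hmem, hva, hvb]


section tri
variable {V : Type*} [LinearOrder V] {a b c : V}

lemma max_triple (hab : a < b) (hbc : b < c) : ({a, b, c} : Finset V).max = (c : WithBot V) := by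
  rw [Finset.max_insert, Finset.max_insert, Finset.max_singleton, ← WithBot.coe_max,
    ← WithBot.coe_max, max_eq_right hbc.le, max_eq_right (hab.trans hbc).le]

lemma min_triple (hab : a < b) (hbc : b < c) : ({a, b, c} : Finset V).min = (a : WithTop V) := by
  rw [Finset.min_insert, Finset.min_insert, Finset.min_singleton]
  exact inf_eq_left.mpr (le_inf (WithTop.coe_le_coe.mpr hab.le)
    (WithTop.coe_le_coe.mpr (hab.trans hbc).le))

lemma card_triple (hab : a < b) (hbc : b < c) : ({a, b, c} : Finset V).card = 3 := by
  rw [Finset.card_insert_of_notMem (by simp [hab.ne, (hab.trans hbc).ne]),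
    Finset.card_insert_of_notMem (by simp [hbc.ne]), Finset.card_singleton]

lemma sdiff_ab (hab : a < b) (hbc : b < c) : ({a, b, c} : Finset V) \ {a, b} = {c} := by
  ext x
  simp only [Finset.mem_sdiff, Finset.mem_insert, Finset.mem_singleton]
  constructor
  · rintro ⟨h1 | h1 | h1, h2⟩ <;> push_neg at h2 <;> tauto
  · rintro rfl
    push_neg
    exact ⟨by tauto, (hab.trans hbc).ne', hbc.ne'⟩

lemma sdiff_bc (hab : a < b) (hbc : b < c) : ({a, b, c} : Finset V) \ {b, c} = {a} := by
  ext x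
  simp only [Finset.mem_sdiff, Finset.mem_insert, Finset.mem_singleton]
  constructor
  · rintro ⟨h1 | h1 | h1, h2⟩ <;> push_neg at h2 <;> tauto
  · rintro rfl
    push_neg
    exact ⟨by tauto, hab.ne, (hab.trans hbc).ne⟩

lemma sdiff_ac (hab : a < b) (hbc : b < c) : ({a, b, c} : Finset V) \ {a, c} = {b} := by
  ext x
  simp only [Finset.mem_sdiff, Finset.mem_insert, Finset.mem_singleton]
  constructor
  · rintro ⟨h1 | h1 | h1, h2⟩ <;> push_neg at h2 <;> tauto
  · rintro rfl
    push_neg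
    exact ⟨by tauto, hab.ne', hbc.ne⟩

end tri

section triSignLemmas
variable {V : Type*} [LinearOrder V] {a b c : V}

lemma subset_triple_ab : ({a, b} : Finset V) ⊆ {a, b, c} := by
  intro x hx
  simp only [Finset.mem_insert, Finset.mem_singleton] at hx ⊢
  tauto

lemma subset_triple_bc : ({b, c} : Finset V) ⊆ {a, b, c} := by
  intro x hx
  simp only [Finset.mem_insert, Finset.mem_singleton] at hx ⊢
  tauto

lemma subset_triple_ac : ({a, c} : Finset V) ⊆ {a, b, c} := by
  intro x hx
  simp only [Finset.mem_insert, Finset.mem_singleton] at hx ⊢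
  tauto

lemma triSign_ab (hab : a < b) (hbc : b < c) :
    triSign ({a, b, c} : Finset V) {a, b} = 1 := by
  rw [triSign, if_pos ⟨subset_triple_ab, Finset.card_pair hab.ne, card_triple hab hbc⟩,
    if_pos (Or.inl (by rw [sdiff_ab hab hbc, Finset.max_singleton, max_triple hab hbc]))]

lemma triSign_bc (hab : a < b) (hbc : b < c) :
    triSign ({a, b, c} : Finset V) {b, c} = 1 := by
  rw [triSign, if_pos ⟨subset_triple_bc, Finset.card_pair hbc.ne, card_triple hab hbc⟩,
    if_pos (Or.inr (by rw [sdiff_bc hab hbc, Finset.min_singleton, min_triple hab hbc]))]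

lemma triSign_ac (hab : a < b) (hbc : b < c) :
    triSign ({a, b, c} : Finset V) {a, c} = -1 := by
  rw [triSign,
    if_pos ⟨subset_triple_ac, Finset.card_pair (hab.trans hbc).ne, card_triple hab hbc⟩,
    if_neg]
  rw [sdiff_ac hab hbc, Finset.max_singleton, Finset.min_singleton, max_triple hab hbc,
    min_triple hab hbc]
  push_neg
  refine ⟨fun h => hbc.ne ?_, fun h => hab.ne' ?_⟩
  · exact_mod_cast h
  · exact_mod_cast h

lemma pair_subset_triple {e : Finset V} (hab : a < b) (hbc : b < c)
    (hsub : e ⊆ ({a, b, c} : Finset V)) (hcard : e.card = 2) :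
    e = {a, b} ∨ e = {a, c} ∨ e = {b, c} := by
  obtain ⟨x, y, hxy, rfl⟩ := Finset.card_eq_two.mp hcard
  have hx := hsub (Finset.mem_insert_self x {y})
  have hy := hsub (by simp : y ∈ ({x, y} : Finset V))
  simp only [Finset.mem_insert, Finset.mem_singleton] at hx hy
  rcases hx with rfl | rfl | rfl <;> rcases hy with rfl | rfl | rfl <;>
    first
      | exact absurd rfl hxy
      | tauto
      | (rw [Finset.pair_comm]; tauto)

end triSignLemmas

lemma pair_entry {V : Type*} [LinearOrder V] {x y : V} (hxy : x < y) (v : V) :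
    (if v ∈ ({x, y} : Finset V) then
      (if ∀ w ∈ ({x, y} : Finset V), w ≤ v then (1 : ℝ) else -1) else 0) =
    if v = y then 1 else if v = x then -1 else 0 := by
  by_cases hvy : v = y
  · subst hvy
    have hmem : v ∈ ({x, v} : Finset V) := by simp
    have hle : ∀ w ∈ ({x, v} : Finset V), w ≤ v := by
      intro w hw
      rcases Finset.mem_insert.mp hw with rfl | hw
      · exact hxy.le
      · simp at hw; subst hw; exact le_refl _
    simp [hmem, hle]
  · by_cases hvx : v = x
    · subst hvx
      have hmem : v ∈ ({v, y} : Finset V) := by simp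
      have hnle : ¬ (∀ w ∈ ({v, y} : Finset V), w ≤ v) := by
        push_neg
        exact ⟨y, by simp, by simpa using hxy⟩
      rw [if_pos hmem, if_neg hnle, if_neg hvy, if_pos rfl]
    · have hmem : v ∉ ({x, y} : Finset V) := by simp [hvx, hvy]
      simp [hmem, hvx, hvy]

lemma d1_mul_d0 {V : Type*} [Fintype V] [LinearOrder V] (G : SimpleGraph V)
    [DecidableRel G.Adj] (F : Finset (Finset V)) (hF : ∀ T ∈ F, G.IsNClique 3 T) :
    d1 G F * d0 G = 0 := by
  ext T v
  obtain ⟨a, b, c, hab, hbc, hT⟩ := card_three_sorted (hF T.1 T.2).2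
  rw [Matrix.mul_apply, Matrix.zero_apply]
  set g : Finset V → ℝ := fun e => triSign T.1 e *
    (if h : e ∈ G.cliqueFinset 2 then d0 G ⟨e, h⟩ v else 0) with hg
  have hconv : ∀ j : {e // e ∈ G.cliqueFinset 2}, d1 G F T j * d0 G j v = g j.1 := by
    intro j
    rw [hg]
    simp only [dif_pos j.2]
    rfl
  rw [Finset.sum_congr rfl (fun j _ => hconv j), Finset.sum_coe_sort (G.cliqueFinset 2) g]
  have hac : a < c := hab.trans hbc
  have hTclique := (hF T.1 T.2).1
  have hmema : a ∈ T.1 := by rw [hT]; simp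
  have hmemb : b ∈ T.1 := by rw [hT]; simp
  have hmemc : c ∈ T.1 := by rw [hT]; simp
  set E0 : Finset (Finset V) := {{a, b}, {a, c}, {b, c}} with hE0
  have hsub : E0 ⊆ G.cliqueFinset 2 := by
    intro e he
    rw [SimpleGraph.mem_cliqueFinset_iff]
    rcases Finset.mem_insert.mp he with rfl | he
    · refine ⟨?_, Finset.card_pair hab.ne⟩
      rw [Finset.coe_insert, Finset.coe_singleton]
      exact SimpleGraph.isClique_pair.mpr (fun _ => hTclique hmema hmemb hab.ne)
    rcases Finset.mem_insert.mp he with rfl | he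
    · refine ⟨?_, Finset.card_pair hac.ne⟩
      rw [Finset.coe_insert, Finset.coe_singleton]
      exact SimpleGraph.isClique_pair.mpr (fun _ => hTclique hmema hmemc hac.ne)
    rw [Finset.mem_singleton] at he
    subst he
    refine ⟨?_, Finset.card_pair hbc.ne⟩
    rw [Finset.coe_insert, Finset.coe_singleton]
    exact SimpleGraph.isClique_pair.mpr (fun _ => hTclique hmemb hmemc hbc.ne)
  rw [← Finset.sum_subset hsub]
  · have hne1 : ({a, b} : Finset V) ∉ ({{a, c}, {b, c}} : Finset (Finset V)) := by
      simp only [Finset.mem_insert, Finset.mem_singleton]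
      push_neg
      constructor
      · intro h
        have : b ∈ ({a, c} : Finset V) := by rw [← h]; simp
        simp only [Finset.mem_insert, Finset.mem_singleton] at this
        rcases this with h' | h'
        · exact hab.ne' h'
        · exact hbc.ne h'
      · intro h
        have : a ∈ ({b, c} : Finset V) := by rw [← h]; simp
        simp only [Finset.mem_insert, Finset.mem_singleton] at this
        rcases this with h' | h'
        · exact hab.ne h'
        · exact hac.ne h'
    have hne2 : ({a, c} : Finset V) ∉ ({{b, c}} : Finset (Finset V)) := by
      simp only [Finset.mem_singleton]
      intro h
      have : a ∈ ({b, c} : Finset V) := by rw [← h]; simp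
      simp only [Finset.mem_insert, Finset.mem_singleton] at this
      rcases this with h' | h'
      · exact hab.ne h'
      · exact hac.ne h'
    rw [hE0, Finset.sum_insert hne1, Finset.sum_insert hne2, Finset.sum_singleton]
    have hm1 : ({a, b} : Finset V) ∈ G.cliqueFinset 2 := hsub (by simp [hE0])
    have hm2 : ({a, c} : Finset V) ∈ G.cliqueFinset 2 := hsub (by simp [hE0])
    have hm3 : ({b, c} : Finset V) ∈ G.cliqueFinset 2 := hsub (by simp [hE0])
    have e1 : g {a, b} = triSign T.1 {a, b} * (if v = b then 1 else if v = a then -1 else 0) := by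
      rw [hg]; simp only; rw [dif_pos hm1, d0_apply_pair G hab]
    have e2 : g {a, c} = triSign T.1 {a, c} * (if v = c then 1 else if v = a then -1 else 0) := by
      rw [hg]; simp only; rw [dif_pos hm2, d0_apply_pair G hac]
    have e3 : g {b, c} = triSign T.1 {b, c} * (if v = c then 1 else if v = b then -1 else 0) := by
      rw [hg]; simp only; rw [dif_pos hm3, d0_apply_pair G hbc]
    rw [e1, e2, e3, hT, triSign_ab hab hbc, triSign_ac hab hbc, triSign_bc hab hbc]
    by_cases hva : v = a <;> by_cases hvb : v = b <;> by_cases hvc : v = c <;>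
      simp [hva, hvb, hvc, hab.ne, hab.ne', hbc.ne, hbc.ne', hac.ne, hac.ne'] <;> ring
  · intro e _ hne
    rw [hg]
    simp only
    apply mul_eq_zero_of_left
    rw [triSign, if_neg]
    rintro ⟨hsub', hcard, -⟩
    apply hne
    rw [hT] at hsub'
    rcases pair_subset_triple hab hbc hsub' hcard with rfl | rfl | rfl <;> simp [hE0]


lemma d0_mulVec_pair {V : Type*} [Fintype V] [LinearOrder V] (G : SimpleGraph V)
    [DecidableRel G.Adj] {a b : V} (hab : a < b)
    (he : ({a, b} : Finset V) ∈ G.cliqueFinset 2) (x : V → ℝ) :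
    (d0 G *ᵥ x) ⟨{a, b}, he⟩ = x b - x a := by
  have hsplit : ∀ v : V, d0 G ⟨{a, b}, he⟩ v * x v =
      (if v = b then x v else 0) + (if v = a then -x v else 0) := by
    intro v
    rw [d0_apply_pair G hab he v]
    by_cases h1 : v = b <;> by_cases h2 : v = a
    · exfalso; rw [h1] at h2; exact hab.ne h2.symm
    · subst h1; simp [h2, fun h : v = a => h2 h]
    · subst h2; simp [hab.ne]
    · simp [h1, h2]
  rw [Matrix.mulVec, dotProduct]
  rw [Finset.sum_congr rfl (fun v _ => hsplit v), Finset.sum_add_distrib,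
    Finset.sum_ite_eq' Finset.univ b (fun v => x v),
    Finset.sum_ite_eq' Finset.univ a (fun v => -x v)]
  simp [sub_eq_add_neg]

lemma edge_card_two {V : Type*} [Fintype V] [LinearOrder V] {G : SimpleGraph V}
    [DecidableRel G.Adj] (e : {e // e ∈ G.cliqueFinset 2}) : (e.1).card = 2 :=
  (SimpleGraph.mem_cliqueFinset_iff.mp e.2).2

lemma adj_mem_cliqueFinset {V : Type*} [Fintype V] [LinearOrder V] {G : SimpleGraph V}
    [DecidableRel G.Adj] {a b : V} (hab : a < b) (hadj : G.Adj a b) :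
    ({a, b} : Finset V) ∈ G.cliqueFinset 2 := by
  rw [SimpleGraph.mem_cliqueFinset_iff]
  refine ⟨?_, Finset.card_pair hab.ne⟩
  rw [Finset.coe_insert, Finset.coe_singleton]
  exact SimpleGraph.isClique_pair.mpr (fun _ => hadj)

lemma d0_ne_zero {V : Type*} [Fintype V] [LinearOrder V] (G : SimpleGraph V)
    [DecidableRel G.Adj] (F : Finset (Finset V)) (hne : F.Nonempty)
    (hF : ∀ T ∈ F, G.IsNClique 3 T) : d0 G ≠ 0 := by
  obtain ⟨T, hT⟩ := hne
  obtain ⟨a, b, c, hab, hbc, hTabc⟩ := card_three_sorted (hF T hT).2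
  have hTc := (hF T hT).1
  have hadj : G.Adj a b := by
    rw [hTabc] at hTc
    exact hTc (by simp) (by simp) hab.ne
  have he := adj_mem_cliqueFinset hab hadj
  intro h
  have : d0 G ⟨{a, b}, he⟩ b = 0 := by rw [h]; rfl
  rw [d0_apply_pair G hab he b, if_pos rfl] at this
  exact one_ne_zero this

lemma d1_ne_zero {V : Type*} [Fintype V] [LinearOrder V] (G : SimpleGraph V)
    [DecidableRel G.Adj] (F : Finset (Finset V)) (hne : F.Nonempty)
    (hF : ∀ T ∈ F, G.IsNClique 3 T) : d1 G F ≠ 0 := by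
  obtain ⟨T, hT⟩ := hne
  obtain ⟨a, b, c, hab, hbc, hTabc⟩ := card_three_sorted (hF T hT).2
  have hTc := (hF T hT).1
  have hadj : G.Adj a b := by
    rw [hTabc] at hTc
    exact hTc (by simp) (by simp) hab.ne
  have he := adj_mem_cliqueFinset hab hadj
  intro h
  have : d1 G F ⟨T, hT⟩ ⟨{a, b}, he⟩ = 0 := by rw [h]; rfl
  rw [d1, Matrix.of_apply] at this
  simp only at this
  rw [hTabc, triSign_ab hab hbc] at this
  exact one_ne_zero this


lemma ker_d0_transpose_d0 {V : Type*} [Fintype V] [LinearOrder V] (G : SimpleGraph V)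
    [DecidableRel G.Adj] (hconn : G.Connected) :
    LinearMap.ker ((d0 G)ᵀ * d0 G).mulVecLin = Submodule.span ℝ {(fun _ => 1 : V → ℝ)} := by
  have hd0_pair : ∀ (x : V → ℝ) {u w : V}, d0 G *ᵥ x = 0 → G.Adj u w → x u = x w := by
    intro x u w hx0 hadj
    rcases lt_or_gt_of_ne (G.ne_of_adj hadj) with h | h
    · have := congrFun hx0 ⟨{u, w}, adj_mem_cliqueFinset h hadj⟩
      rw [d0_mulVec_pair G h _ x] at this
      have : x w - x u = 0 := this
      linarith
    · have := congrFun hx0 ⟨{w, u}, adj_mem_cliqueFinset h hadj.symm⟩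
      rw [d0_mulVec_pair G h _ x] at this
      have : x u - x w = 0 := this
      linarith
  have hreach : ∀ (x : V → ℝ), d0 G *ᵥ x = 0 → ∀ u w : V, G.Reachable u w → x u = x w := by
    intro x hx0 u w h
    obtain ⟨p⟩ := h
    induction p with
    | nil => rfl
    | cons hadj p ih => exact (hd0_pair x hx0 hadj).trans ih
  have hone : d0 G *ᵥ (fun _ => 1 : V → ℝ) = 0 := by
    funext e
    obtain ⟨ev, he⟩ := e
    obtain ⟨a, b, hab, rfl⟩ := card_two_sorted (SimpleGraph.mem_cliqueFinset_iff.mp he).2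
    rw [d0_mulVec_pair G hab he]
    simp
  apply le_antisymm
  · intro x hx
    rw [LinearMap.mem_ker, Matrix.mulVecLin_apply] at hx
    have hd0x : d0 G *ᵥ x = 0 := by
      have hL : ((d0 G)ᵀ * d0 G) *ᵥ x = 0 := hx
      have h1 : x ⬝ᵥ (((d0 G)ᵀ * d0 G) *ᵥ x) = (d0 G *ᵥ x) ⬝ᵥ (d0 G *ᵥ x) := by
        rw [← Matrix.mulVec_mulVec, Matrix.dotProduct_mulVec, Matrix.vecMul_transpose]
      rw [hL, dotProduct_zero] at h1
      exact dotProduct_self_eq_zero.mp h1.symm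
    have hV : Nonempty V := hconn.nonempty
    obtain ⟨v₀⟩ := hV
    rw [Submodule.mem_span_singleton]
    refine ⟨x v₀, ?_⟩
    funext u
    simp only [Pi.smul_apply, smul_eq_mul, mul_one]
    exact (hreach x hd0x u v₀ (hconn u v₀)).symm
  · rw [Submodule.span_le, Set.singleton_subset_iff]
    show ((d0 G)ᵀ * d0 G).mulVecLin (fun _ => 1) = 0
    rw [Matrix.mulVecLin_apply, ← Matrix.mulVec_mulVec, hone, Matrix.mulVec_zero]

lemma lambdaMinPos_eq_secondSmallest {V : Type*} [Fintype V] [LinearOrder V] (G : SimpleGraph V)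
    [DecidableRel G.Adj] (hconn : G.Connected) (hcard : 2 ≤ Fintype.card V) :
    lambdaMinPos ((d0 G)ᵀ * d0 G) = secondSmallestEig ((d0 G)ᵀ * d0 G) := by
  set L := (d0 G)ᵀ * d0 G with hLdef
  have hL : L.IsHermitian := by
    have := Matrix.isHermitian_conjTranspose_mul_self (d0 G)
    rwa [Matrix.conjTranspose_eq_transpose_of_trivial] at this
  have hpsd : L.PosSemidef := by
    have := Matrix.posSemidef_conjTranspose_mul_self (d0 G)
    rwa [Matrix.conjTranspose_eq_transpose_of_trivial] at this
  -- number of zero eigenvalues is 1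
  have hker : Module.finrank ℝ (LinearMap.ker L.mulVecLin) = 1 := by
    rw [ker_d0_transpose_d0 G hconn]
    apply finrank_span_singleton
    intro h
    have hV : Nonempty V := hconn.nonempty
    obtain ⟨v₀⟩ := hV
    exact one_ne_zero (congrFun h v₀)
  have hrank : L.rank = Fintype.card V - 1 := by
    have h1 := LinearMap.finrank_range_add_finrank_ker L.mulVecLin
    rw [hker, Module.finrank_pi] at h1
    rw [Matrix.rank]
    omega
  have hcnt : Fintype.card {i // hL.eigenvalues i = 0} = 1 := by
    have h1 := hL.rank_eq_card_non_zero_eigs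
    rw [hrank] at h1
    have h2 := Fintype.card_subtype_compl (fun i => hL.eigenvalues i ≠ 0)
    rw [← h1] at h2
    have h3 : Fintype.card {i // ¬ hL.eigenvalues i ≠ 0} =
        Fintype.card {i // hL.eigenvalues i = 0} :=
      Fintype.card_congr (Equiv.subtypeEquivRight (fun i => not_not))
    omega
  -- the multiset of roots
  have hroots : L.charpoly.roots = Finset.univ.val.map hL.eigenvalues := hermRootsCharpoly hL
  set s := L.charpoly.roots with hs
  have h0 : ∀ x ∈ s, (0:ℝ) ≤ x := by
    intro x hx
    rw [hroots] at hx
    obtain ⟨i, _, rfl⟩ := Multiset.mem_map.mp hx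
    exact hpsd.eigenvalues_nonneg i
  have hc : s.count 0 = 1 := by
    rw [hroots, Multiset.count_map]
    have : Multiset.filter (fun a => (0:ℝ) = hL.eigenvalues a) Finset.univ.val =
        Multiset.filter (fun a => hL.eigenvalues a = 0) Finset.univ.val := by
      apply Multiset.filter_congr
      intro i _
      exact eq_comm
    rw [this]
    have h4 : Fintype.card {i // hL.eigenvalues i = 0} =
        (Finset.filter (fun i => hL.eigenvalues i = 0) Finset.univ).card :=
      Fintype.card_subtype _
    rw [h4] at hcnt
    exact hcnt
  have hlen : 2 ≤ Multiset.card s := by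
    rw [hroots, Multiset.card_map]
    simpa using hcard
  have hleast := sort_getD_one_isLeast h0 hc hlen
  have hset : posEigs L = {μ : ℝ | 0 < μ ∧ μ ∈ s} := by
    ext μ
    rw [posEigs]
    rw [mem_posEigs_iff hL μ]
    simp only [Set.mem_setOf_eq, hroots, Multiset.mem_map]
    constructor
    · rintro ⟨hμ, i, hi⟩
      exact ⟨hμ, i, by simp, hi⟩
    · rintro ⟨hμ, i, _, hi⟩
      exact ⟨hμ, i, hi⟩
  show sInf (posEigs L) = _
  rw [hset, hleast.csInf_eq]
  rfl

/-- For a finite simple graph `G` with linearly ordered vertex set and a nonempty set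
`F` of triangles (3-cliques) of `G`, the smallest positive eigenvalue of the
restricted total edge Laplacian `L₁ = δ₀ δ₀ᵀ + δ₁(𝒯)ᵀ δ₁(𝒯)` equals
`min(λ_min⁺(δ₀ᵀ δ₀), λ(𝒯))`; and if `G` is connected, it equals
`min(λ₂(L), λ(𝒯))`. -/
theorem stmt0 {V : Type*} [Fintype V] [LinearOrder V] (G : SimpleGraph V)
    [DecidableRel G.Adj] (F : Finset (Finset V)) (hne : F.Nonempty)
    (hF : ∀ T ∈ F, G.IsNClique 3 T) :
    lambdaMinPos (d0 G * (d0 G)ᵀ + (d1 G F)ᵀ * d1 G F) =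
      min (lambdaMinPos ((d0 G)ᵀ * d0 G)) (lambdaMinPos ((d1 G F)ᵀ * d1 G F)) ∧
    (G.Connected →
      lambdaMinPos (d0 G * (d0 G)ᵀ + (d1 G F)ᵀ * d1 G F) =
        min (secondSmallestEig ((d0 G)ᵀ * d0 G)) (lambdaMinPos ((d1 G F)ᵀ * d1 G F))) := by
  have hBA : d1 G F * d0 G = 0 := d1_mul_d0 G F hF
  have hAB : (d0 G)ᵀ * (d1 G F)ᵀ = 0 := by
    rw [← Matrix.transpose_mul, hBA, Matrix.transpose_zero]
  have hPQ : (d0 G * (d0 G)ᵀ) * ((d1 G F)ᵀ * d1 G F) = 0 := by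
    calc (d0 G * (d0 G)ᵀ) * ((d1 G F)ᵀ * d1 G F)
        = d0 G * ((d0 G)ᵀ * (d1 G F)ᵀ) * d1 G F := by
          rw [Matrix.mul_assoc, Matrix.mul_assoc, Matrix.mul_assoc]
      _ = 0 := by rw [hAB, Matrix.mul_zero, Matrix.zero_mul]
  have hQP : ((d1 G F)ᵀ * d1 G F) * (d0 G * (d0 G)ᵀ) = 0 := by
    calc ((d1 G F)ᵀ * d1 G F) * (d0 G * (d0 G)ᵀ)
        = (d1 G F)ᵀ * (d1 G F * d0 G) * (d0 G)ᵀ := by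
          rw [Matrix.mul_assoc, Matrix.mul_assoc, Matrix.mul_assoc]
      _ = 0 := by rw [hBA, Matrix.mul_zero, Matrix.zero_mul]
  have hPne : (posEigs (d0 G * (d0 G)ᵀ)).Nonempty := by
    rw [← posEigs_transpose_mul]
    exact posEigs_nonempty (d0_ne_zero G F hne hF)
  have hQne : (posEigs ((d1 G F)ᵀ * d1 G F)).Nonempty :=
    posEigs_nonempty (d1_ne_zero G F hne hF)
  have hpart1 : lambdaMinPos (d0 G * (d0 G)ᵀ + (d1 G F)ᵀ * d1 G F) =
      min (lambdaMinPos ((d0 G)ᵀ * d0 G)) (lambdaMinPos ((d1 G F)ᵀ * d1 G F)) := by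
    show sInf (posEigs _) = min (sInf (posEigs _)) (sInf (posEigs _))
    rw [posEigs_add hPQ hQP, csInf_union (posEigs_bddBelow _) hPne (posEigs_bddBelow _) hQne,
      ← posEigs_transpose_mul (d0 G)]
  refine ⟨hpart1, fun hconn => ?_⟩
  rw [hpart1]
  congr 1
  obtain ⟨T, hT⟩ := hne
  have hcard : 2 ≤ Fintype.card V := by
    have h3 : (T : Finset V).card = 3 := (hF T hT).2
    have := Finset.card_le_univ T
    rw [h3] at this
    omega
  exact lambdaMinPos_eq_secondSmallest G hconn hcard
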